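/- arXiv:0802.1430 — 2 statements merged into one kernel-verified Lean document; each statement's English description precedes it below -/
import Mathlib

section
/- Representer theorem for spectral penalties: Let X, Y be finite-dimensional inner product spaces, let data (x_i, y_i, t_i), i = 1,…,N be given, let R_N(F) = (1/N) Σ_i ℓ(⟨x_i, F y_i⟩, t_i) for any loss ℓ, and let Ω(F) = Σ_i s_i(σ_i(F)) be a spectral penalty with each s_i : ℝ≥0 → ℝ≥0 ∪ {+∞} nondecreasing with s_i(0) = 0. If the problem min_F R_N(F) + λΩ(F) over linear maps F : Y → X has a minimizer, then it has a minimizer lying in (span x_i) ⊗ (span y_i), i.e., of the form F = Σ_{i,j} α_{ij} u_i ⊗ v_j for orthonormal bases (u_i) of span{x_1,…,x_N} and (v_j) of span{y_1,…,y_N}. -/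
open RealInnerProductSpace

noncomputable def singularValue {E F : Type*} [NormedAddCommGroup E] [InnerProductSpace ℝ E]
    [NormedAddCommGroup F] [InnerProductSpace ℝ F]
    (T : E →ₗ[ℝ] F) (i : ℕ) : ℝ :=
  ⨆ V : {V : Submodule ℝ E // Module.finrank ℝ V = i + 1},
    ⨅ x : {x : E // x ∈ V.1 ∧ ‖x‖ = 1}, ‖T x‖
open scoped ENNReal

section Aux

variable {E F : Type*} [NormedAddCommGroup E] [InnerProductSpace ℝ E]
  [NormedAddCommGroup F] [InnerProductSpace ℝ F]

lemma unit_of_finrank_pos (V : Submodule ℝ E) (i : ℕ) (hV : Module.finrank ℝ V = i + 1) :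
    Nonempty {x : E // x ∈ V ∧ ‖x‖ = 1} := by
  have hpos : 0 < Module.finrank ℝ V := by rw [hV]; exact Nat.succ_pos i
  have : Nontrivial V := Module.nontrivial_of_finrank_pos hpos
  obtain ⟨w, hw⟩ := exists_ne (0 : V)
  have hv0 : (w : E) ≠ 0 := fun h => hw (Subtype.ext h)
  refine ⟨⟨‖(w:E)‖⁻¹ • (w:E), V.smul_mem _ w.2, ?_⟩⟩
  rw [norm_smul, norm_inv, norm_norm, inv_mul_cancel₀ (norm_ne_zero_iff.2 hv0)]

lemma singularValue_nonneg (T : E →ₗ[ℝ] F) (i : ℕ) : 0 ≤ singularValue T i :=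
  Real.iSup_nonneg fun _ => Real.iInf_nonneg fun _ => norm_nonneg _

lemma sv_bddAbove [FiniteDimensional ℝ E] (T : E →ₗ[ℝ] F) (i : ℕ) :
    BddAbove (Set.range fun V : {V : Submodule ℝ E // Module.finrank ℝ V = i + 1} =>
      ⨅ x : {x : E // x ∈ V.1 ∧ ‖x‖ = 1}, ‖T x‖) := by
  refine ⟨‖LinearMap.toContinuousLinearMap T‖, ?_⟩
  rintro r ⟨V, rfl⟩
  have hne := unit_of_finrank_pos V.1 i V.2
  obtain ⟨u⟩ := hne
  refine ciInf_le_of_le ⟨0, by rintro r ⟨z, rfl⟩; exact norm_nonneg _⟩ u ?_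
  have := (LinearMap.toContinuousLinearMap T).le_opNorm u.1
  simpa [u.2.2] using this

lemma singularValue_comp_le [FiniteDimensional ℝ E] [FiniteDimensional ℝ F]
    (T : E →ₗ[ℝ] F) (P : F →ₗ[ℝ] F) (Q : E →ₗ[ℝ] E)
    (hP : ∀ z, ‖P z‖ ≤ ‖z‖) (hQ : ∀ z, ‖Q z‖ ≤ ‖z‖) (i : ℕ) :
    singularValue (P ∘ₗ T ∘ₗ Q) i ≤ singularValue T i := by
  refine Real.iSup_le (fun V => ?_) (singularValue_nonneg T i)
  have hbb : ∀ (W : Submodule ℝ E),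
      BddBelow (Set.range fun x : {x : E // x ∈ W ∧ ‖x‖ = 1} => ‖(P ∘ₗ T ∘ₗ Q) x‖) :=
    fun W => ⟨0, by rintro r ⟨z, rfl⟩; exact norm_nonneg _⟩
  by_cases hinj : ∀ v ∈ V.1, Q v = 0 → v = 0
  · -- Q injective on V
    set Qr : V.1 →ₗ[ℝ] E := Q ∘ₗ V.1.subtype with hQr
    have hQrinj : Function.Injective Qr := by
      rw [← LinearMap.ker_eq_bot, LinearMap.ker_eq_bot']
      rintro ⟨v, hv⟩ h
      have : Q v = 0 := h
      exact Subtype.ext (hinj v hv this)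
    have hrank : Module.finrank ℝ (LinearMap.range Qr) = i + 1 := by
      rw [LinearMap.finrank_range_of_inj hQrinj, V.2]
    refine le_ciSup_of_le (sv_bddAbove T i) ⟨LinearMap.range Qr, hrank⟩ ?_
    have hne' := unit_of_finrank_pos (LinearMap.range Qr) i hrank
    refine le_ciInf fun x' => ?_
    obtain ⟨x'v, hx'mem, hx'norm⟩ := x'
    obtain ⟨⟨v, hvV⟩, hvq⟩ := hx'mem
    have hQv : Q v = x'v := hvq
    have hv0 : v ≠ 0 := by
      intro h
      rw [h, map_zero] at hQv
      rw [← hQv] at hx'norm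
      simp at hx'norm
    have hnv : (0:ℝ) < ‖v‖ := norm_pos_iff.2 hv0
    set u : E := ‖v‖⁻¹ • v with hu
    have huV : u ∈ V.1 := V.1.smul_mem _ hvV
    have hun : ‖u‖ = 1 := by
      rw [hu, norm_smul, norm_inv, norm_norm, inv_mul_cancel₀ hnv.ne']
    refine ciInf_le_of_le (hbb V.1) ⟨u, huV, hun⟩ ?_
    have h1 : ‖(P ∘ₗ T ∘ₗ Q) u‖ ≤ ‖T (Q u)‖ := hP _
    have h2 : Q u = ‖v‖⁻¹ • x'v := by rw [hu, map_smul, hQv]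
    have h3 : ‖T (Q u)‖ = ‖v‖⁻¹ * ‖T x'v‖ := by
      rw [h2, map_smul, norm_smul, norm_inv, norm_norm]
    have h4 : (1:ℝ) ≤ ‖v‖ := by
      calc (1:ℝ) = ‖Q v‖ := by rw [hQv, hx'norm]
      _ ≤ ‖v‖ := hQ v
    have h5 : ‖v‖⁻¹ * ‖T x'v‖ ≤ ‖T x'v‖ := by
      apply mul_le_of_le_one_left (norm_nonneg _)
      exact inv_le_one_of_one_le₀ h4
    calc ‖(P ∘ₗ T ∘ₗ Q) u‖ ≤ ‖T (Q u)‖ := h1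
    _ = ‖v‖⁻¹ * ‖T x'v‖ := h3
    _ ≤ ‖T x'v‖ := h5
  · -- some nonzero v ∈ V with Q v = 0
    push_neg at hinj
    obtain ⟨v, hvV, hQv, hv0⟩ := hinj
    have hnv : (0:ℝ) < ‖v‖ := norm_pos_iff.2 hv0
    set u : E := ‖v‖⁻¹ • v with hu
    have huV : u ∈ V.1 := V.1.smul_mem _ hvV
    have hun : ‖u‖ = 1 := by
      rw [hu, norm_smul, norm_inv, norm_norm, inv_mul_cancel₀ hnv.ne']
    refine le_trans (ciInf_le_of_le (hbb V.1) ⟨u, huV, hun⟩ ?_) (singularValue_nonneg T i)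
    have : Q u = 0 := by rw [hu, map_smul, hQv, smul_zero]
    simp [LinearMap.comp_apply, this]

end Aux

/-- representer theorem for spectral penalties. -/
theorem representer_spectral
    {X Y : Type*} [NormedAddCommGroup X] [InnerProductSpace ℝ X] [FiniteDimensional ℝ X]
    [NormedAddCommGroup Y] [InnerProductSpace ℝ Y] [FiniteDimensional ℝ Y]
    {N : ℕ} (x : Fin N → X) (y : Fin N → Y) (t : Fin N → ℝ) (ℓ : ℝ → ℝ → ℝ)
    (s : ℕ → ℝ → ℝ≥0∞) (hs_mono : ∀ i, Monotone (s i)) (hs_zero : ∀ i, s i 0 = 0)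
    (lam : ℝ) (hlam : 0 < lam)
    -- objective: empirical risk plus lam times the spectral penalty, valued in EReal
    (J : (Y →ₗ[ℝ] X) → EReal)
    (hJ : ∀ F, J F =
      (((1 / (N : ℝ)) * ∑ i, ℓ ⟪x i, F (y i)⟫ (t i) : ℝ) : EReal)
        + (lam : EReal) *
          ((∑ i ∈ Finset.range (Module.finrank ℝ Y), s i (singularValue F i) : ℝ≥0∞) : EReal))
    -- if the problem has a minimizer ...
    (hmin : ∃ F₀ : Y →ₗ[ℝ] X, ∀ F : Y →ₗ[ℝ] X, J F₀ ≤ J F) :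
    -- ... then it has a minimizer lying in (span xᵢ) ⊗ (span yᵢ),
    -- i.e. satisfying F₁ = P ∘ F₁ ∘ Q for the orthogonal projections onto the data spans
    ∃ F₁ : Y →ₗ[ℝ] X, (∀ F : Y →ₗ[ℝ] X, J F₁ ≤ J F) ∧
      F₁ = ((Submodule.span ℝ (Set.range x)).subtype ∘ₗ
              (Submodule.orthogonalProjection (Submodule.span ℝ (Set.range x))).toLinearMap) ∘ₗ F₁ ∘ₗ
            ((Submodule.span ℝ (Set.range y)).subtype ∘ₗ
              (Submodule.orthogonalProjection (Submodule.span ℝ (Set.range y))).toLinearMap) := by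
  obtain ⟨F₀, hF₀⟩ := hmin
  set Kx : Submodule ℝ X := Submodule.span ℝ (Set.range x) with hKx
  set Ky : Submodule ℝ Y := Submodule.span ℝ (Set.range y) with hKy
  set P : X →ₗ[ℝ] X := Kx.subtype ∘ₗ (Submodule.orthogonalProjection Kx).toLinearMap with hPdef
  set Q : Y →ₗ[ℝ] Y := Ky.subtype ∘ₗ (Submodule.orthogonalProjection Ky).toLinearMap with hQdef
  have hPapp : ∀ z, P z = (Submodule.orthogonalProjection Kx z : X) := fun z => rfl
  have hQapp : ∀ z, Q z = (Submodule.orthogonalProjection Ky z : Y) := fun z => rfl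
  have hPnorm : ∀ z, ‖P z‖ ≤ ‖z‖ := by
    intro z
    rw [hPapp]
    calc ‖(Submodule.orthogonalProjection Kx z : X)‖ = ‖Submodule.orthogonalProjection Kx z‖ := rfl
    _ ≤ ‖Submodule.orthogonalProjection Kx‖ * ‖z‖ := (Submodule.orthogonalProjection Kx).le_opNorm z
    _ ≤ 1 * ‖z‖ := by
        exact mul_le_mul_of_nonneg_right (Submodule.orthogonalProjection_norm_le Kx) (norm_nonneg z)
    _ = ‖z‖ := one_mul _
  have hQnorm : ∀ z, ‖Q z‖ ≤ ‖z‖ := by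
    intro z
    rw [hQapp]
    calc ‖(Submodule.orthogonalProjection Ky z : Y)‖ = ‖Submodule.orthogonalProjection Ky z‖ := rfl
    _ ≤ ‖Submodule.orthogonalProjection Ky‖ * ‖z‖ := (Submodule.orthogonalProjection Ky).le_opNorm z
    _ ≤ 1 * ‖z‖ := by
        exact mul_le_mul_of_nonneg_right (Submodule.orthogonalProjection_norm_le Ky) (norm_nonneg z)
    _ = ‖z‖ := one_mul _
  have hPid : ∀ z ∈ Kx, P z = z := by
    intro z hz
    rw [hPapp]
    exact Submodule.starProjection_eq_self_iff.2 hz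
  have hQid : ∀ z ∈ Ky, Q z = z := by
    intro z hz
    rw [hQapp]
    exact Submodule.starProjection_eq_self_iff.2 hz
  refine ⟨P ∘ₗ F₀ ∘ₗ Q, ?_, ?_⟩
  · -- minimality
    intro F
    refine le_trans ?_ (hF₀ F)
    rw [hJ (P ∘ₗ F₀ ∘ₗ Q), hJ F₀]
    -- risk terms are equal
    have hrisk : ∀ i, ⟪x i, (P ∘ₗ F₀ ∘ₗ Q) (y i)⟫ = ⟪x i, F₀ (y i)⟫ := by
      intro i
      have hyi : y i ∈ Ky := Submodule.subset_span (Set.mem_range_self i)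
      have hxi : x i ∈ Kx := Submodule.subset_span (Set.mem_range_self i)
      have h1 : (P ∘ₗ F₀ ∘ₗ Q) (y i) = P (F₀ (y i)) := by
        simp only [LinearMap.comp_apply]
        rw [show Q (y i) = y i from hQid _ hyi]
      rw [h1, hPapp]
      have h2 := Submodule.inner_orthogonalProjection_eq_of_mem_left (𝕜 := ℝ) (K := Kx)
        (⟨x i, hxi⟩ : Kx) (F₀ (y i))
      rw [Submodule.coe_inner] at h2
      exact h2
    have hriskEq : ((1 / (N : ℝ)) * ∑ i, ℓ ⟪x i, (P ∘ₗ F₀ ∘ₗ Q) (y i)⟫ (t i) : ℝ)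
        = ((1 / (N : ℝ)) * ∑ i, ℓ ⟪x i, F₀ (y i)⟫ (t i) : ℝ) := by
      congr 1
      exact Finset.sum_congr rfl fun i _ => by rw [hrisk i]
    rw [hriskEq]
    -- penalty terms
    have hpen : (∑ i ∈ Finset.range (Module.finrank ℝ Y),
          s i (singularValue (P ∘ₗ F₀ ∘ₗ Q) i) : ℝ≥0∞)
        ≤ ∑ i ∈ Finset.range (Module.finrank ℝ Y), s i (singularValue F₀ i) := by
      refine Finset.sum_le_sum fun i _ => (hs_mono i) ?_
      exact singularValue_comp_le F₀ P Q hPnorm hQnorm i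
    refine add_le_add_right ?_ _
    refine mul_le_mul_of_nonneg_left ?_ ?_
    · exact EReal.coe_ennreal_le_coe_ennreal_iff.2 hpen
    · exact le_of_lt (by exact_mod_cast hlam)
  · -- fixed point property
    have hPP : P ∘ₗ P = P := by
      ext z
      simp only [LinearMap.comp_apply]
      exact hPid (P z) (by rw [hPapp]; exact (Submodule.orthogonalProjection Kx z).2)
    have hQQ : Q ∘ₗ Q = Q := by
      ext z
      simp only [LinearMap.comp_apply]
      exact hQid (Q z) (by rw [hQapp]; exact (Submodule.orthogonalProjection Ky z).2)
    calc P ∘ₗ F₀ ∘ₗ Q = (P ∘ₗ P) ∘ₗ F₀ ∘ₗ (Q ∘ₗ Q) := by rw [hPP, hQQ]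
    _ = P ∘ₗ (P ∘ₗ F₀ ∘ₗ Q) ∘ₗ Q := by
        simp only [LinearMap.comp_assoc]
end

section
/- If ∇H(U,V) = 0 and the Hessian of H(U,V) = G(UVᵀ) at (U,V) is positive semidefinite, and the last columns of U and V are zero, then for perturbations dU, dV which are zero except for arbitrary last columns u, v, positive semidefiniteness of the Hessian implies vᵀ ∇G(UVᵀ) u ≥ 0 for all u, v, hence ∇G(UVᵀ) = 0. -/
open Matrix

attribute [local instance] Matrix.normedAddCommGroup Matrix.normedSpace

/-- if (U,V) is a second-order critical point of H(U,V) = G(UVᵀ) and the last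
columns of U and V are zero, then ∇G(UVᵀ) = 0. -/
theorem gradient_zero_of_zero_last_columns
    {p q m : ℕ}
    (G : Matrix (Fin p) (Fin q) ℝ → ℝ) (hG_smooth : ContDiff ℝ 2 G)
    (H : Matrix (Fin p) (Fin (m + 1)) ℝ × Matrix (Fin q) (Fin (m + 1)) ℝ → ℝ)
    (hH : ∀ UV, H UV = G (UV.1 * UV.2ᵀ))
    (U : Matrix (Fin p) (Fin (m + 1)) ℝ) (V : Matrix (Fin q) (Fin (m + 1)) ℝ)
    (hU : ∀ i, U i (Fin.last m) = 0) (hV : ∀ j, V j (Fin.last m) = 0)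
    (hcrit : fderiv ℝ H (U, V) = 0)
    (hhess : ∀ w : Matrix (Fin p) (Fin (m + 1)) ℝ × Matrix (Fin q) (Fin (m + 1)) ℝ,
      0 ≤ fderiv ℝ (fderiv ℝ H) (U, V) w w) :
    fderiv ℝ G (U * Vᵀ) = 0 := by
  classical
  set A : Matrix (Fin p) (Fin q) ℝ := U * Vᵀ with hAdef
  -- smoothness of H
  have hBsm : ContDiff ℝ 2 (fun UV : Matrix (Fin p) (Fin (m+1)) ℝ × Matrix (Fin q) (Fin (m+1)) ℝ =>
      UV.1 * UV.2ᵀ) := by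
    apply contDiff_pi.mpr; intro i; apply contDiff_pi.mpr; intro j
    have h : (fun UV : Matrix (Fin p) (Fin (m+1)) ℝ × Matrix (Fin q) (Fin (m+1)) ℝ =>
        (UV.1 * UV.2ᵀ) i j) = fun UV => ∑ k, UV.1 i k * UV.2 j k := by
      funext UV; simp [Matrix.mul_apply]
    rw [h]
    apply ContDiff.sum; intro k _
    exact ((contDiff_pi.mp ((contDiff_pi.mp contDiff_fst) i)) k).mul
      ((contDiff_pi.mp ((contDiff_pi.mp contDiff_snd) j)) k)
  have hHeq : H = fun UV => G (UV.1 * UV.2ᵀ) := funext hH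
  have hHsm : ContDiff ℝ 2 H := by rw [hHeq]; exact hG_smooth.comp hBsm
  have hG1 := hG_smooth.fderiv_right (m := 1) (by norm_num)
  have hH1 := hHsm.fderiv_right (m := 1) (by norm_num)
  -- key inequality
  have key : ∀ (u : Fin p → ℝ) (v : Fin q → ℝ), 0 ≤ fderiv ℝ G A (vecMulVec u v) := by
    intro u v
    set dU : Matrix (Fin p) (Fin (m+1)) ℝ := fun i k => if k = Fin.last m then u i else 0 with hdU
    set dV : Matrix (Fin q) (Fin (m+1)) ℝ := fun j k => if k = Fin.last m then v j else 0 with hdV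
    set M : Matrix (Fin p) (Fin q) ℝ := vecMulVec u v with hM
    set x : Matrix (Fin p) (Fin (m+1)) ℝ × Matrix (Fin q) (Fin (m+1)) ℝ := (U, V) with hx
    set w : Matrix (Fin p) (Fin (m+1)) ℝ × Matrix (Fin q) (Fin (m+1)) ℝ := (dU, dV) with hw
    set c : ℝ → Matrix (Fin p) (Fin q) ℝ := fun t => A + t^2 • M with hcdef
    have halg : ∀ t : ℝ, (U + t • dU) * (V + t • dV)ᵀ = c t := by
      intro t
      ext i j
      simp only [hcdef, hAdef, hM, Matrix.mul_apply, Matrix.add_apply, Matrix.smul_apply,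
        Matrix.transpose_apply, Matrix.vecMulVec_apply, smul_eq_mul]
      rw [Fin.sum_univ_castSucc, Fin.sum_univ_castSucc (f := fun k => U i k * V j k)]
      have h1 : ∀ k : Fin m, dU i k.castSucc = 0 := fun k =>
        if_neg (Fin.castSucc_lt_last k).ne
      have h2 : ∀ k : Fin m, dV j k.castSucc = 0 := fun k =>
        if_neg (Fin.castSucc_lt_last k).ne
      have h3 : dU i (Fin.last m) = u i := if_pos rfl
      have h4 : dV j (Fin.last m) = v j := if_pos rfl
      simp only [h1, h2, h3, h4, hU i, hV j, mul_zero, zero_add, add_zero, zero_mul]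
      ring
    have hceq : ∀ t : ℝ, x + t • w = (U + t • dU, V + t • dV) := by
      intro t; simp [hx, hw, Prod.ext_iff]
    -- derivative of c
    have hc : ∀ t : ℝ, HasDerivAt c ((2*t) • M) t := by
      intro t
      have h1 : HasDerivAt (fun s : ℝ => s^2) (2*t) t := by
        simpa [mul_comm] using hasDerivAt_pow 2 t
      exact ((hasDerivAt_const t A).add (h1.smul_const M)).congr_deriv (zero_add _)
    -- g t = fderiv G (c t) M
    set g : ℝ → ℝ := fun t => fderiv ℝ G (c t) M with hgdef
    have hgdiff : DifferentiableAt ℝ g 0 := by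
      have h1 : DifferentiableAt ℝ (fderiv ℝ G) (c 0) :=
        (hG1.differentiable one_ne_zero).differentiableAt
      exact ((ContinuousLinearMap.apply ℝ ℝ M).differentiableAt.comp _
        (h1.comp _ (hc 0).differentiableAt))
    obtain ⟨g', hg'⟩ : ∃ g', HasDerivAt g g' 0 := ⟨_, hgdiff.hasDerivAt⟩
    -- φ t = H (x + t • w), two derivative formulas
    have hφ1 : ∀ t : ℝ, HasDerivAt (fun s : ℝ => H (x + s • w)) (fderiv ℝ H (x + t • w) w) t := by
      intro t
      have hline : HasDerivAt (fun s : ℝ => x + s • w) w t := by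
        exact (((hasDerivAt_id t).smul_const w).const_add x).congr_deriv (one_smul ℝ w)
      have := ((hHsm.differentiable (by norm_num) (x + t • w)).hasFDerivAt).comp_hasDerivAt t hline
      exact this
    have hφ2 : ∀ t : ℝ, HasDerivAt (fun s : ℝ => H (x + s • w)) (2 * t * g t) t := by
      intro t
      have heq : (fun s : ℝ => H (x + s • w)) = fun s => G (c s) := by
        funext s; rw [hH, hceq s]; exact congrArg G (halg s)
      rw [heq]
      have := ((hG_smooth.differentiable (by norm_num) (c t)).hasFDerivAt).comp_hasDerivAt t (hc t)
      exact this.congr_deriv (by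
        rw [ContinuousLinearMap.map_smul]; simp [hgdef, smul_eq_mul, mul_assoc]; exact Or.inl rfl)
    have hψeq : (fun t : ℝ => fderiv ℝ H (x + t • w) w) = fun t => 2 * t * g t := by
      funext t; exact (hφ1 t).unique (hφ2 t)
    -- derivative of ψ at 0, two ways
    have hψ1 : HasDerivAt (fun t : ℝ => fderiv ℝ H (x + t • w) w)
        (fderiv ℝ (fderiv ℝ H) x w w) 0 := by
      have hline : HasDerivAt (fun s : ℝ => x + s • w) w 0 := by
        exact (((hasDerivAt_id (0:ℝ)).smul_const w).const_add x).congr_deriv (one_smul ℝ w)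
      have h1 : DifferentiableAt ℝ (fderiv ℝ H) x := (hH1.differentiable one_ne_zero).differentiableAt
      have h2 : HasDerivAt (fun t : ℝ => fderiv ℝ H (x + t • w)) (fderiv ℝ (fderiv ℝ H) x w) 0 := by
        letI : NormedAddCommGroup (Matrix (Fin p) (Fin (m + 1)) ℝ × Matrix (Fin q) (Fin (m + 1)) ℝ →L[ℝ] ℝ) :=
          ContinuousLinearMap.toNormedAddCommGroup
        letI : NormedSpace ℝ (Matrix (Fin p) (Fin (m + 1)) ℝ × Matrix (Fin q) (Fin (m + 1)) ℝ →L[ℝ] ℝ) :=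
          ContinuousLinearMap.toNormedSpace
        have := h1.hasFDerivAt.comp_hasDerivAt_of_eq (0:ℝ) hline (by simp)
        exact this
      have := ((ContinuousLinearMap.apply ℝ ℝ w).hasFDerivAt).comp_hasDerivAt (0:ℝ) h2
      exact this
    have hψ2 : HasDerivAt (fun t : ℝ => fderiv ℝ H (x + t • w) w) (2 * g 0) 0 := by
      rw [hψeq]
      have h1 : HasDerivAt (fun t : ℝ => 2 * t) 2 0 := by
        simpa using (hasDerivAt_id (0:ℝ)).const_mul 2
      have := h1.mul hg'
      exact this.congr_deriv (by simp)
    have hval : fderiv ℝ (fderiv ℝ H) x w w = 2 * g 0 := hψ1.unique hψ2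
    have hc0 : c 0 = A := by simp [hcdef]
    have hg0 : g 0 = fderiv ℝ G A M := by show fderiv ℝ G (c 0) M = _; rw [hc0]
    have hpos := hhess w
    rw [hval, hg0] at hpos
    show (0:ℝ) ≤ fderiv ℝ G A M
    linarith
  -- from the inequality to equality
  have hzero : ∀ (u : Fin p → ℝ) (v : Fin q → ℝ), fderiv ℝ G A (vecMulVec u v) = 0 := by
    intro u v
    have h1 := key u v
    have h2 := key (-u) v
    have hneg : vecMulVec (-u) v = -vecMulVec u v := by
      ext i j; simp [vecMulVec_apply]
    rw [hneg, map_neg] at h2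
    linarith
  -- conclude
  ext M
  have hrep : fderiv ℝ G A M = 0 := by
    have hsb : ∀ (i : Fin p) (j : Fin q),
        single i j (M i j) = vecMulVec (Pi.single i (M i j)) (Pi.single j 1) := by
      intro i j; ext k l
      simp only [single, vecMulVec_apply, Pi.single_apply, of_apply]
      split_ifs <;> simp_all
    rw [matrix_eq_sum_single M]
    rw [map_sum]
    apply Finset.sum_eq_zero
    intro i _
    rw [map_sum]
    apply Finset.sum_eq_zero
    intro j _
    rw [hsb i j, hzero]
  simpa using hrep
end
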